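/- For every a ∈ X′′, sup{a(η) : η ∈ H_Q^⊥, ‖η‖ ≤ 1} = inf{c ≥ 0 : ∃ h ∈ 𝔥_Q such that −c•I(e) ≤ a − h ≤ c•I(e)}. -/

import Mathlib

open NormedSpace

/-- Positivity in the dual of an ordered normed space. -/
def dualNonneg (X : Type*) [NormedAddCommGroup X] [NormedSpace ℝ X] [Lattice X]
    (η : StrongDual ℝ X) : Prop :=
  ∀ f : X, 0 ≤ f → 0 ≤ η f

/-- Positivity in the bidual. -/
def bidualNonneg (X : Type*) [NormedAddCommGroup X] [NormedSpace ℝ X] [Lattice X]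
    (a : StrongDual ℝ (StrongDual ℝ X)) : Prop :=
  ∀ η : StrongDual ℝ X, dualNonneg X η → 0 ≤ a η

set_option maxHeartbeats 1000000 in
theorem stmt6
    (X : Type*) [NormedAddCommGroup X] [Lattice X] [IsOrderedAddMonoid X] [HasSolidNorm X] [NormedSpace ℝ X] [CompleteSpace X]
    -- `e` is a positive order unit inducing the lattice norm of the AM-space `X`
    (e : X) (he : 0 ≤ e)
    (hnorm : ∀ f : X, ‖f‖ = sInf {c : ℝ | -(c • e) ≤ f ∧ f ≤ c • e})
    (hbnorm : ∀ a : StrongDual ℝ (StrongDual ℝ X), ‖a‖ = sInf {c : ℝ |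
      bidualNonneg X (a + c • inclusionInDoubleDual ℝ X e) ∧
      bidualNonneg X (c • inclusionInDoubleDual ℝ X e - a)})
    -- standing assumption on `Q`
    (H : Submodule ℝ X) (hH : IsClosed (H : Set X))
    (Q : Set (StrongDual ℝ X)) (hQne : Q.Nonempty) (hQcl : IsClosed Q) (hQconv : Convex ℝ Q)
    (hQ : Q = {η : StrongDual ℝ X | ∀ h ∈ H, η h = 0} ∩
      {η : StrongDual ℝ X | dualNonneg X η ∧ η e = 1})
    -- `𝔥_Q = (H_Q^⊥)^⊥`
    (hQd : Set (StrongDual ℝ (StrongDual ℝ X)))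
    (hhQd : hQd = {a : StrongDual ℝ (StrongDual ℝ X) |
      ∀ η : StrongDual ℝ X, (∀ h ∈ H, η h = 0) → a η = 0})
    (a : StrongDual ℝ (StrongDual ℝ X)) :
    sSup {r : ℝ | ∃ η : StrongDual ℝ X, (∀ h ∈ H, η h = 0) ∧ ‖η‖ ≤ 1 ∧ r = a η} =
      sInf {c : ℝ | 0 ≤ c ∧ ∃ h ∈ hQd,
        bidualNonneg X ((a - h) + c • inclusionInDoubleDual ℝ X e) ∧
        bidualNonneg X (c • inclusionInDoubleDual ℝ X e - (a - h))} := by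
  obtain ⟨η₀, hη₀⟩ := hQne
  rw [hQ] at hη₀
  obtain ⟨-, hη₀pos, hη₀e⟩ := hη₀
  set Ie : StrongDual ℝ (StrongDual ℝ X) := inclusionInDoubleDual ℝ X e with hIedef
  have hIeapp : ∀ η : StrongDual ℝ X, Ie η = η e := fun η => rfl
  -- the set defining the bidual norm of `b`
  set Sb : StrongDual ℝ (StrongDual ℝ X) → Set ℝ := fun b =>
    {c : ℝ | bidualNonneg X (b + c • Ie) ∧ bidualNonneg X (c • Ie - b)} with hSb
  have hSbdd : ∀ b, BddBelow (Sb b) := by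
    intro b
    refine ⟨0, ?_⟩
    rintro c' ⟨hc1, hc2⟩
    have e1 := hc1 η₀ hη₀pos
    have e2 := hc2 η₀ hη₀pos
    simp only [ContinuousLinearMap.add_apply, ContinuousLinearMap.sub_apply,
      ContinuousLinearMap.smul_apply, hIeapp, hη₀e, smul_eq_mul, mul_one] at e1 e2
    linarith
  have lemA : ∀ (b : StrongDual ℝ (StrongDual ℝ X)) (c : ℝ), c ∈ Sb b → ‖b‖ ≤ c := by
    intro b c hc
    rw [hbnorm b]
    exact csInf_le (hSbdd b) hc
  have lemB : ∀ (b : StrongDual ℝ (StrongDual ℝ X)) (c : ℝ), ‖b‖ ≤ c → c ∈ Sb b := by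
    intro b c hc
    have hc0 : (0:ℝ) ≤ c := le_trans (norm_nonneg b) hc
    by_cases hS : (Sb b).Nonempty
    · have hInf : sInf (Sb b) = ‖b‖ := (hbnorm b).symm
      have key : ∀ η : StrongDual ℝ X, dualNonneg X η →
          (0 ≤ b η + c * η e ∧ 0 ≤ c * η e - b η) := by
        intro η hη
        have hηe : 0 ≤ η e := hη e he
        have step : ∀ ε : ℝ, 0 < ε →
            0 ≤ b η + c * η e + ε ∧ 0 ≤ c * η e - b η + ε := by
          intro ε hε
          rcases eq_or_lt_of_le hηe with hz | hpos
          · obtain ⟨c', h1, h2⟩ := hS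
            have e1 := h1 η hη
            have e2 := h2 η hη
            simp only [ContinuousLinearMap.add_apply, ContinuousLinearMap.sub_apply,
              ContinuousLinearMap.smul_apply, hIeapp, smul_eq_mul, ← hz, mul_zero] at e1 e2
            constructor <;> nlinarith
          · have hlt : sInf (Sb b) < c + ε / η e := by
              rw [hInf]; have : 0 < ε / η e := div_pos hε hpos; linarith
            obtain ⟨c', hc', hc'lt⟩ := exists_lt_of_csInf_lt hS hlt
            obtain ⟨h1, h2⟩ := hc'
            have e1 := h1 η hη
            have e2 := h2 η hη
            simp only [ContinuousLinearMap.add_apply, ContinuousLinearMap.sub_apply,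
              ContinuousLinearMap.smul_apply, hIeapp, smul_eq_mul] at e1 e2
            have hmul : c' * η e ≤ (c + ε / η e) * η e :=
              mul_le_mul_of_nonneg_right (le_of_lt hc'lt) hηe
            have hdiv : ε / η e * η e = ε := div_mul_cancel₀ ε (ne_of_gt hpos)
            constructor <;> nlinarith
        constructor
        · by_contra hcon
          push_neg at hcon
          have := (step (-(b η + c * η e) / 2) (by linarith)).1
          linarith
        · by_contra hcon
          push_neg at hcon
          have := (step (-(c * η e - b η) / 2) (by linarith)).2
          linarith
      constructor
      · intro η hη
        have := (key η hη).1
        simpa only [ContinuousLinearMap.add_apply, ContinuousLinearMap.smul_apply,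
          hIeapp, smul_eq_mul] using this
      · intro η hη
        have := (key η hη).2
        simpa only [ContinuousLinearMap.sub_apply, ContinuousLinearMap.smul_apply,
          hIeapp, smul_eq_mul] using this
    · have hb0 : ‖b‖ = 0 := by
        rw [hbnorm b]
        rw [Set.not_nonempty_iff_eq_empty] at hS
        rw [hSb] at hS
        simp only at hS
        rw [hS]
        exact Real.sInf_empty
      have hb : b = 0 := (ContinuousLinearMap.opNorm_zero_iff b).mp hb0
      subst hb
      constructor
      · intro η hη
        simp only [ContinuousLinearMap.add_apply, ContinuousLinearMap.smul_apply,
          hIeapp, smul_eq_mul, ContinuousLinearMap.zero_apply, zero_add]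
        exact mul_nonneg hc0 (hη e he)
      · intro η hη
        simp only [ContinuousLinearMap.sub_apply, ContinuousLinearMap.smul_apply,
          hIeapp, smul_eq_mul, ContinuousLinearMap.zero_apply, sub_zero]
        exact mul_nonneg hc0 (hη e he)
  -- the annihilator of H in the dual, as a submodule
  set N : @Submodule ℝ (StrongDual ℝ X) _ _ NormedSpace.toModule :=
    { carrier := {η : StrongDual ℝ X | ∀ h ∈ H, η h = 0}
      add_mem' := by
        intro x y hx hy h hh
        simp [ContinuousLinearMap.add_apply, hx h hh, hy h hh]
      zero_mem' := by intro h hh; simp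
      smul_mem' := by
        intro c x hx h hh
        simp [ContinuousLinearMap.smul_apply, hx h hh] } with hN
  have hNmem : ∀ η : StrongDual ℝ X, η ∈ N ↔ ∀ h ∈ H, η h = 0 := fun η => Iff.rfl
  set T : Set ℝ := {r : ℝ | ∃ η : StrongDual ℝ X, (∀ h ∈ H, η h = 0) ∧ ‖η‖ ≤ 1 ∧ r = a η}
    with hT
  have hT0 : (0:ℝ) ∈ T := ⟨0, fun h _ => rfl, by simp, by simp⟩
  have hTne : T.Nonempty := ⟨0, hT0⟩
  have hTbdd : BddAbove T := by
    refine ⟨‖a‖, ?_⟩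
    rintro r ⟨η, -, hη1, rfl⟩
    calc a η ≤ |a η| := le_abs_self _
      _ ≤ ‖a‖ * ‖η‖ := a.le_opNorm η
      _ ≤ ‖a‖ * 1 := by
          exact mul_le_mul_of_nonneg_left hη1 (norm_nonneg a)
      _ = ‖a‖ := mul_one _
  set L : ℝ := sSup T with hL
  have hL0 : 0 ≤ L := le_csSup hTbdd hT0
  -- restriction of a to N
  set f : N →L[ℝ] ℝ := a.comp N.subtypeL with hf
  have hfa : ∀ x : N, f x = a (x : StrongDual ℝ X) := fun x => rfl
  have hfle : ‖f‖ ≤ L := by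
    refine ContinuousLinearMap.opNorm_le_bound f hL0 ?_
    intro x
    rcases eq_or_ne x 0 with rfl | hx
    · simp
    · have hxn : (0:ℝ) < ‖x‖ := norm_pos_iff.mpr hx
      have hxn' : ‖(x : StrongDual ℝ X)‖ = ‖x‖ := rfl
      set η : StrongDual ℝ X := ‖x‖⁻¹ • (x : StrongDual ℝ X) with hη
      have hηmem : ∀ h ∈ H, η h = 0 := by
        intro h hh
        have := x.2 h hh
        simp [hη, ContinuousLinearMap.smul_apply, this]
      have hηnorm : ‖η‖ ≤ 1 := by
        rw [hη, norm_smul, norm_inv, norm_norm, hxn']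
        rw [inv_mul_cancel₀ (ne_of_gt hxn)]
      have h1 : a η ≤ L := le_csSup hTbdd ⟨η, hηmem, hηnorm, rfl⟩
      have h2 : a (-η) ≤ L := le_csSup hTbdd ⟨-η, by
          intro h hh; simp [hηmem h hh], by simpa using hηnorm, rfl⟩
      rw [map_neg] at h2
      have habsη : |a η| ≤ L := abs_le.mpr ⟨by linarith, h1⟩
      have hxeq : (x : StrongDual ℝ X) = ‖x‖ • η := by
        rw [hη, smul_inv_smul₀ (ne_of_gt hxn)]
      have hax : a (x : StrongDual ℝ X) = ‖x‖ * a η := by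
        rw [hxeq, map_smul, smul_eq_mul]
      have habs : |a (x : StrongDual ℝ X)| ≤ L * ‖x‖ := by
        rw [hax, abs_mul, abs_of_pos hxn, mul_comm L ‖x‖]
        exact mul_le_mul_of_nonneg_left habsη (le_of_lt hxn)
      rw [hfa, Real.norm_eq_abs]
      exact habs
  have hLlef : L ≤ ‖f‖ := by
    refine csSup_le hTne ?_
    rintro r ⟨η, hηmem, hη1, rfl⟩
    have : a η = f ⟨η, hηmem⟩ := rfl
    rw [this]
    calc f ⟨η, hηmem⟩ ≤ |f ⟨η, hηmem⟩| := le_abs_self _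
      _ = ‖f ⟨η, hηmem⟩‖ := rfl
      _ ≤ ‖f‖ * ‖(⟨η, hηmem⟩ : N)‖ := f.le_opNorm _
      _ ≤ ‖f‖ * 1 := mul_le_mul_of_nonneg_left hη1 (norm_nonneg f)
      _ = ‖f‖ := mul_one _
  have hfL : ‖f‖ = L := le_antisymm hfle hLlef
  obtain ⟨g, hgext, hgnorm⟩ := exists_extension_norm_eq N f
  have hgL : ‖g‖ = L := by rw [hgnorm, hfL]
  set h₀ : StrongDual ℝ (StrongDual ℝ X) := a - g with hh₀
  have hh₀mem : h₀ ∈ hQd := by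
    rw [hhQd]
    intro η hηv
    have : g η = f ⟨η, hηv⟩ := hgext ⟨η, hηv⟩
    simp [hh₀, ContinuousLinearMap.sub_apply, this, hfa]
  have hsub : a - h₀ = g := by rw [hh₀]; abel
  have hLmem : L ∈ {c : ℝ | 0 ≤ c ∧ ∃ h ∈ hQd,
      bidualNonneg X ((a - h) + c • Ie) ∧
      bidualNonneg X (c • Ie - (a - h))} := by
    refine ⟨hL0, h₀, hh₀mem, ?_⟩
    rw [hsub]
    exact lemB g L (le_of_eq hgL)
  have hLlb : ∀ c ∈ {c : ℝ | 0 ≤ c ∧ ∃ h ∈ hQd,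
      bidualNonneg X ((a - h) + c • Ie) ∧
      bidualNonneg X (c • Ie - (a - h))}, L ≤ c := by
    rintro c ⟨hc0, h', hh'mem, hcond⟩
    have hnle : ‖a - h'‖ ≤ c := lemA (a - h') c hcond
    have : L ≤ ‖a - h'‖ := by
      refine csSup_le hTne ?_
      rintro r ⟨η, hηmem, hη1, rfl⟩
      rw [hhQd] at hh'mem
      have hh'η : h' η = 0 := hh'mem η hηmem
      have : a η = (a - h') η := by
        simp [ContinuousLinearMap.sub_apply, hh'η]
      rw [this]
      calc (a - h') η ≤ |(a - h') η| := le_abs_self _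
        _ ≤ ‖a - h'‖ * ‖η‖ := (a - h').le_opNorm η
        _ ≤ ‖a - h'‖ * 1 := mul_le_mul_of_nonneg_left hη1 (ContinuousLinearMap.opNorm_nonneg _)
        _ = ‖a - h'‖ := mul_one _
    linarith
  exact le_antisymm (le_csInf ⟨L, hLmem⟩ hLlb) (csInf_le ⟨L, hLlb⟩ hLmem)
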